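/- Let z₁, z₂ ∈ ℂ* and suppose the polynomial P(u) = conj(z₁)·conj(z₂)·u⁴ - (conj(z₁)+conj(z₂))·u³ + (z₁+z₂)·u - z₁·z₂ factors as conj(z₁)conj(z₂)·(u-a)(u-b)(u-c)(u-1/conj(c)) with |a| = |b| = 1 and 0 < |c| < 1. Then |z₁ + z₂| > |z₁·z₂|. -/

import Mathlib

open Complex ComplexConjugate

theorem two_simple_unimodular_zeros_case (z₁ z₂ a b c : ℂ)
    (hz₁ : z₁ ≠ 0) (hz₂ : z₂ ≠ 0)
    (ha : ‖a‖ = 1) (hb : ‖b‖ = 1)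
    (hc0 : 0 < ‖c‖) (hc1 : ‖c‖ < 1)
    (h : ∀ u : ℂ, conj z₁ * conj z₂ * u ^ 4 - (conj z₁ + conj z₂) * u ^ 3
        + (z₁ + z₂) * u - z₁ * z₂
      = conj z₁ * conj z₂ * (u - a) * (u - b) * (u - c) * (u - 1 / conj c)) :
    ‖z₁ + z₂‖ > ‖z₁ * z₂‖ := by
  have hc : c ≠ 0 := by
    intro h0; rw [h0] at hc0; simp at hc0
  have hcc : conj c ≠ 0 := by simpa using hc
  have hQ : conj z₁ * conj z₂ ≠ 0 := by simp [hz₁, hz₂]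
  -- coefficient of u³ : s̄ = q̄ · e₁
  have eq3 : conj z₁ + conj z₂ = conj z₁ * conj z₂ * (a + b + c + 1/conj c) := by
    linear_combination (-(h 2) + h (-2) + 2*(h 1) - 2*(h (-1)))/12
  -- coefficient of u² : e₂ = 0
  have eq2 : conj z₁ * conj z₂ * (a*b + (a+b)*(c + 1/conj c) + c/conj c) = 0 := by
    linear_combination (h 2 + h (-2) - 16*(h 1) - 16*(h (-1)) + 30*(h 0))/24
  have he2 : a*b + (a+b)*(c + 1/conj c) + c/conj c = 0 :=
    (mul_eq_zero.mp eq2).resolve_left hQ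
  -- |z₁+z₂| = |z₁z₂| · |e₁|
  have habs : ‖z₁ + z₂‖
      = ‖z₁ * z₂‖ * ‖a + b + c + 1/conj c‖ := by
    calc ‖z₁ + z₂‖ = ‖conj (z₁ + z₂)‖ :=
          (Complex.norm_conj _).symm
      _ = ‖conj z₁ * conj z₂ * (a + b + c + 1/conj c)‖ := by
          rw [map_add, eq3]
      _ = ‖z₁ * z₂‖ * ‖a + b + c + 1/conj c‖ := by
          rw [norm_mul]; congr 1; rw [← map_mul, Complex.norm_conj]
  -- the analytic core : |e₁| > 1
  have hmc : c * conj c = ((‖c‖ : ℂ))^2 := by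
    rw [Complex.mul_conj, Complex.normSq_eq_norm_sq]; push_cast; ring
  have habsc : (‖c‖ : ℂ) ≠ 0 := by exact_mod_cast hc0.ne'
  have he2' : a * b * conj c + (a + b) * (c * conj c + 1) + c = 0 := by
    field_simp at he2; linear_combination he2
  set m : ℝ := ‖c‖ + (‖c‖)⁻¹ with hm
  have hm' : ((m : ℝ) : ℂ) = (‖c‖ : ℂ) + ((‖c‖ : ℂ))⁻¹ := by
    rw [hm]; push_cast; ring
  have key : (a+b+c+1/conj c) * (c + 1/conj c)
      = ((m^2-1 : ℝ):ℂ) * (c / conj c) - a*b := by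
    push_cast
    rw [hm']
    field_simp
    linear_combination (conj c * (‖c‖:ℂ)^2) * he2'
      + ((‖c‖:ℂ)^2 * c * conj c - 1) * hmc
  have hd : ‖c + 1/conj c‖ = m := by
    have h1 : c + 1/conj c = (((‖c‖)^2 + 1 : ℝ) : ℂ)/conj c := by
      field_simp
      linear_combination (norm := (push_cast; ring)) hmc
    rw [h1, norm_div, Complex.norm_conj, Complex.norm_real, Real.norm_eq_abs,
      abs_of_pos (by positivity), hm]
    field_simp
  have hmul : ‖c‖ * (‖c‖)⁻¹ = 1 := mul_inv_cancel₀ hc0.ne'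
  have hsq : 0 < (1 - ‖c‖)^2 := pow_pos (by linarith) 2
  have hm2 : 2 < m := by
    rw [hm]
    nlinarith [hsq, hc0, hmul]
  have hw : ‖c / conj c‖ = 1 := by
    rw [norm_div, Complex.norm_conj, div_self hc0.ne']
  have hlow : m^2 - 2 ≤ ‖((m^2-1 : ℝ):ℂ) * (c / conj c) - a*b‖ := by
    have tri := le_trans (le_abs_self _) (abs_norm_sub_norm_le
      (((m^2-1 : ℝ):ℂ) * (c / conj c)) (a*b))
    rw [norm_mul, hw, norm_mul, ha, hb, Complex.norm_real, Real.norm_eq_abs,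
      abs_of_pos (by nlinarith)] at tri
    linarith
  have hkey : ‖a+b+c+1/conj c‖ * m
      = ‖((m^2-1 : ℝ):ℂ) * (c / conj c) - a*b‖ := by
    calc ‖a+b+c+1/conj c‖ * m
        = ‖a+b+c+1/conj c‖ * ‖c + 1/conj c‖ := by rw [hd]
      _ = ‖(a+b+c+1/conj c) * (c + 1/conj c)‖ := (norm_mul _ _).symm
      _ = _ := by rw [key]
  have h5 : m^2 - 2 ≤ ‖a+b+c+1/conj c‖ * m := hkey ▸ hlow
  have he1 : 1 < ‖a + b + c + 1/conj c‖ := by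
    by_contra hcon
    push_neg at hcon
    have h6 : ‖a+b+c+1/conj c‖ * m ≤ 1 * m :=
      mul_le_mul_of_nonneg_right hcon (by linarith)
    rw [one_mul] at h6
    have h7 : m^2 - 2 ≤ m := le_trans h5 h6
    have h8 : 0 < (m - 2) * (m + 1) :=
      mul_pos (by linarith) (by linarith)
    nlinarith [h7, h8]
  have hq0 : 0 < ‖z₁ * z₂‖ := by
    rw [norm_mul]; exact mul_pos (norm_pos_iff.mpr hz₁) (norm_pos_iff.mpr hz₂)
  calc ‖z₁ * z₂‖ = ‖z₁ * z₂‖ * 1 := by ring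
    _ < ‖z₁ + z₂‖ := by rw [habs]; exact (mul_lt_mul_iff_right₀ hq0).mpr he1
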